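/- arXiv:2408.15571 — 2 statements merged into one kernel-verified Lean document; each statement's English description precedes it below -/
import Mathlib

section
/- For every integer $n \ge 1$ and real $\phi$ with $0 < \phi < \pi$, the sequence $r_n$ defined by the recurrence $2 r_n r_{n-1} + 2\cos\phi = \frac{1-r_n^2}{r_n}\big((n+1) r_{n+1} + (n-1) r_{n-1}\big) - \frac{1-r_{n-1}^2}{r_{n-1}}\big(n r_n + (n-2) r_{n-2}\big)$, viewed with $r_n = r_n(\xi)$ depending analytically on a parameter $\xi$ near $0$ with initial data $r_{-1}=0$, $r_0 = 1$, $r_1 = \xi \sin\phi/(\pi - \xi\phi)$, has first-order Taylor coefficient $R_{n,1} = \frac{\sin n\phi}{n\pi}$ for $n \ge 1$, i.e., $r_n(\xi) = \delta_{n,0} + \frac{\sin n\phi}{n\pi}\xi + O(\xi^2)$. -/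
open Real Filter Topology

private lemma aux_bigO {f : ℝ → ℝ} (hf : AnalyticAt ℝ f 0) (h0 : f 0 = 0) :
    (fun ξ : ℝ => f ξ - deriv f 0 * ξ) =O[𝓝 (0 : ℝ)] (fun ξ => ξ ^ 2) := by
  obtain ⟨p, hp⟩ := hf
  have h2 := hp.isBigO_sub_partialSum_pow 2
  have hderiv : deriv f 0 = p.coeff 1 := hp.deriv
  have hps : ∀ y : ℝ, p.partialSum 2 y = f 0 + deriv f 0 * y := by
    intro y
    have e1 : p.partialSum 2 y = (p 0 fun _ => y) + (p 1 fun _ => y) := by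
      simp [FormalMultilinearSeries.partialSum, Finset.sum_range_succ]
    rw [e1, hp.coeff_zero, FormalMultilinearSeries.apply_eq_pow_smul_coeff, ← hderiv]
    simp; ring
  have h3 : (fun y : ℝ => f y - deriv f 0 * y) =O[𝓝 (0:ℝ)] fun y : ℝ => ‖y‖ ^ 2 := by
    refine h2.congr (fun y => ?_) (fun y => rfl)
    rw [hps, h0, zero_add, zero_add]
  refine h3.congr (fun y => rfl) (fun y => ?_)
  simp [Real.norm_eq_abs, sq_abs]

/-- Linearization at `ξ = 0` of the discrete Painlevé V recurrence
`2 rₙ rₙ₋₁ + 2cos φ = ((1-rₙ²)/rₙ)((n+1)rₙ₊₁ + (n-1)rₙ₋₁)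
  - ((1-rₙ₋₁²)/rₙ₋₁)(n rₙ + (n-2)rₙ₋₂)`
with initial data `r₋₁ = 0`, `r₀ = 1`, `r₁ = ξ sin φ/(π - ξφ)`:
for `n ≥ 1` the first Taylor coefficient of `ξ ↦ rₙ(ξ)` at `0` is
`R_{n,1} = sin(nφ)/(nπ)`, i.e. `rₙ(ξ) = δ_{n,0} + (sin(nφ)/(nπ))ξ + O(ξ²)`. -/
theorem dPV_first_taylor_coefficient (φ : ℝ) (hφ : 0 < φ) (hφπ : φ < π)
    (r : ℤ → ℝ → ℝ)
    (hanalytic : ∀ n : ℤ, AnalyticAt ℝ (r n) 0)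
    (hrec : ∀ n : ℤ, 1 ≤ n → ∀ᶠ ξ in 𝓝[≠] (0 : ℝ),
      2 * r n ξ * r (n - 1) ξ + 2 * Real.cos φ
        = (1 - (r n ξ) ^ 2) / r n ξ * ((n + 1) * r (n + 1) ξ + (n - 1) * r (n - 1) ξ)
          - (1 - (r (n - 1) ξ) ^ 2) / r (n - 1) ξ * (n * r n ξ + (n - 2) * r (n - 2) ξ))
    (hm1 : ∀ ξ : ℝ, r (-1) ξ = 0)
    (h0 : ∀ ξ : ℝ, r 0 ξ = 1)
    (h1 : ∀ ξ : ℝ, r 1 ξ = ξ * Real.sin φ / (π - ξ * φ)) :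
    ∀ n : ℤ, 1 ≤ n →
      r n 0 = 0 ∧
      (fun ξ : ℝ => r n ξ - Real.sin (n * φ) / (n * π) * ξ) =O[𝓝 (0 : ℝ)]
        (fun ξ => ξ ^ 2) := by
  have hπ : (0:ℝ) < π := Real.pi_pos
  have hsin : Real.sin φ ≠ 0 := ne_of_gt (Real.sin_pos_of_pos_of_lt_pi hφ hφπ)
  have hdiff : ∀ m : ℤ, DifferentiableAt ℝ (r m) 0 := fun m => (hanalytic m).differentiableAt
  have hr0fun : r 0 = fun _ : ℝ => (1:ℝ) := funext h0
  have hd0 : deriv (r 0) 0 = 0 := by rw [hr0fun]; simp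
  have hr10 : r 1 0 = 0 := by simp [h1]
  -- derivative of r 1 at 0
  have hd1 : HasDerivAt (r 1) (Real.sin φ / π) 0 := by
    have hfun : r 1 = fun ξ : ℝ => ξ * Real.sin φ / (π - ξ * φ) := funext h1
    rw [hfun]
    have hu : HasDerivAt (fun ξ : ℝ => ξ * Real.sin φ) (Real.sin φ) 0 := by
      simpa using (hasDerivAt_id (0:ℝ)).mul_const (Real.sin φ)
    have hv : HasDerivAt (fun ξ : ℝ => π - ξ * φ) (-φ) 0 := by
      simpa using ((hasDerivAt_id (0:ℝ)).mul_const φ).const_sub π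
    have hv0 : (π - (0:ℝ) * φ) ≠ 0 := by simpa using hπ.ne'
    have := hu.fun_div hv hv0
    refine this.congr_deriv ?_
    simp only [zero_mul, sub_zero, mul_zero, neg_zero]
    rw [pow_two, mul_div_mul_right _ _ hπ.ne']
  -- telescoping of the recurrence
  have htel : ∀ m : ℤ, 1 ≤ m → ∀ᶠ ξ in 𝓝[≠] (0:ℝ),
      (1 - (r m ξ)^2) / r m ξ * (((m:ℝ)+1) * r (m+1) ξ + ((m:ℝ)-1) * r (m-1) ξ)
        = 2*(m:ℝ)*Real.cos φ + 2 * ∑ k ∈ Finset.Icc (1:ℤ) m, r k ξ * r (k-1) ξ := by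
    refine Int.le_induction ?_ ?_
    · filter_upwards [hrec 1 le_rfl] with ξ hξ
      rw [show (1:ℤ) - 1 = 0 by decide, show (1:ℤ) - 2 = -1 by decide] at hξ
      rw [h0, hm1] at hξ
      push_cast at hξ ⊢
      rw [show Finset.Icc (1:ℤ) 1 = {1} from Finset.Icc_self 1, Finset.sum_singleton,
        show (1:ℤ) - 1 = 0 by decide, h0]
      norm_num at hξ ⊢
      linarith
    · intro n hn ih
      filter_upwards [hrec (n+1) (by omega), ih] with ξ hrecξ ihξ
      rw [show n + 1 - 1 = n by ring, show n + 1 - 2 = n - 1 by ring] at hrecξ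
      have hins : Finset.Icc (1:ℤ) (n+1) = insert (n+1) (Finset.Icc 1 n) := by
        ext x; simp only [Finset.mem_Icc, Finset.mem_insert]; omega
      have hnotmem : (n+1) ∉ Finset.Icc (1:ℤ) n := by simp
      rw [hins, Finset.sum_insert hnotmem, show n + 1 - 1 = n by ring]
      push_cast at hrecξ ⊢
      linear_combination ihξ - hrecξ
  -- main induction: values and derivatives of all r_k, 1 ≤ k ≤ n
  have main : ∀ n : ℤ, 1 ≤ n → ∀ k : ℤ, 1 ≤ k → k ≤ n →
      (r k 0 = 0 ∧ deriv (r k) 0 = Real.sin ((k:ℝ)*φ) / ((k:ℝ)*π)) := by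
    refine Int.le_induction ?_ ?_
    · intro k hk1 hk2
      have hk : k = 1 := le_antisymm hk2 hk1
      subst hk
      refine ⟨hr10, ?_⟩
      rw [hd1.deriv]; norm_num
    · intro n hn IH k hk1 hk2
      by_cases hk : k ≤ n
      · exact IH k hk1 hk
      have hk' : k = n + 1 := by omega
      subst hk'
      -- the step
      have hrk0 : ∀ k : ℤ, 1 ≤ k → k ≤ n → r k 0 = 0 := fun k a b => (IH k a b).1
      have hrn0 : r n 0 = 0 := hrk0 n hn le_rfl
      have hdn : deriv (r n) 0 = Real.sin ((n:ℝ)*φ) / ((n:ℝ)*π) := (IH n hn le_rfl).2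
      set H : ℝ → ℝ :=
        fun ξ => 2*(n:ℝ)*Real.cos φ + 2 * ∑ k ∈ Finset.Icc (1:ℤ) n, r k ξ * r (k-1) ξ with hHdef
      have hHan : AnalyticAt ℝ H 0 := by
        apply analyticAt_const.add
        apply analyticAt_const.mul
        exact Finset.analyticAt_fun_sum _ (fun k _ => (hanalytic k).mul (hanalytic (k-1)))
      have hH0 : H 0 = 2*(n:ℝ)*Real.cos φ := by
        have hz : ∀ k ∈ Finset.Icc (1:ℤ) n, r k 0 * r (k-1) 0 = 0 := by
          intro k hk
          rw [Finset.mem_Icc] at hk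
          rw [hrk0 k hk.1 hk.2, zero_mul]
        rw [hHdef]
        simp only
        rw [Finset.sum_congr rfl hz, Finset.sum_const_zero, mul_zero, add_zero]
      have hsum : HasDerivAt (fun ξ => ∑ k ∈ Finset.Icc (1:ℤ) n, r k ξ * r (k-1) ξ)
          (∑ k ∈ Finset.Icc (1:ℤ) n,
            (deriv (r k) 0 * r (k-1) 0 + r k 0 * deriv (r (k-1)) 0)) 0 :=
        HasDerivAt.fun_sum (fun k _ => ((hdiff k).hasDerivAt.mul (hdiff (k-1)).hasDerivAt))
      have hsumval : ∑ k ∈ Finset.Icc (1:ℤ) n,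
          (deriv (r k) 0 * r (k-1) 0 + r k 0 * deriv (r (k-1)) 0) = Real.sin φ / π := by
        rw [Finset.sum_eq_single 1]
        · rw [show (1:ℤ) - 1 = 0 by decide, h0, hd1.deriv, hd0, hr10]
          ring
        · intro k hk hne
          rw [Finset.mem_Icc] at hk
          have h2k : 2 ≤ k := by omega
          rw [hrk0 k hk.1 hk.2, hrk0 (k-1) (by omega) (by omega), mul_zero, zero_mul, add_zero]
        · intro h
          exact absurd (Finset.mem_Icc.mpr ⟨le_rfl, hn⟩) h
      have hHd : HasDerivAt H (2*(Real.sin φ/π)) 0 := by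
        have := (hsum.const_mul (2:ℝ)).const_add (2*(n:ℝ)*Real.cos φ)
        rw [hsumval] at this
        exact this
      -- r n is not eventually zero
      have hfreq : ∃ᶠ ξ in 𝓝[≠] (0:ℝ), r n ξ ≠ 0 := by
        by_contra hcon
        rw [Filter.not_frequently] at hcon
        have hzero : ∀ᶠ ξ in 𝓝[≠] (0:ℝ), r n ξ = 0 := hcon.mono fun ξ h => not_not.mp h
        have hH00 : ∃ᶠ ξ in 𝓝[≠] (0:ℝ), H ξ = (fun _ : ℝ => (0:ℝ)) ξ := by
          refine ((htel n hn).and hzero).frequently.mono ?_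
          rintro ξ ⟨hG, hz⟩
          rw [hz] at hG
          simpa using hG.symm
        have hHeq0 : H =ᶠ[𝓝 (0:ℝ)] (fun _ => (0:ℝ)) :=
          (hHan.frequently_eq_iff_eventually_eq analyticAt_const).mp hH00
        have hderiv0 : deriv H 0 = 0 := by
          rw [hHeq0.deriv_eq]; simp
        rw [hHd.deriv] at hderiv0
        have h2 : Real.sin φ / π = 0 := by linarith
        exact hsin ((div_eq_zero_iff.mp h2).resolve_right hπ.ne')
      -- the analytic identity
      have hfeq : ∃ᶠ ξ in 𝓝[≠] (0:ℝ),
          (fun ξ => (1 - (r n ξ)^2) * (((n:ℝ)+1) * r (n+1) ξ + ((n:ℝ)-1) * r (n-1) ξ)) ξ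
            = (fun ξ => r n ξ * H ξ) ξ := by
        refine (hfreq.and_eventually (htel n hn)).mono ?_
        rintro ξ ⟨hne, hG⟩
        simp only
        have hexp : (1 - (r n ξ)^2) * (((n:ℝ)+1) * r (n+1) ξ + ((n:ℝ)-1) * r (n-1) ξ)
            = ((1 - (r n ξ)^2) / r n ξ
                * (((n:ℝ)+1) * r (n+1) ξ + ((n:ℝ)-1) * r (n-1) ξ)) * r n ξ := by
          field_simp
        rw [hexp, hG]
        ring
      have hΦan : AnalyticAt ℝ
          (fun ξ => (1 - (r n ξ)^2) * (((n:ℝ)+1) * r (n+1) ξ + ((n:ℝ)-1) * r (n-1) ξ)) 0 :=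
        (analyticAt_const.sub ((hanalytic n).pow 2)).mul
          ((analyticAt_const.mul (hanalytic (n+1))).add (analyticAt_const.mul (hanalytic (n-1))))
      have hΨan : AnalyticAt ℝ (fun ξ => r n ξ * H ξ) 0 := (hanalytic n).mul hHan
      have heq : (fun ξ => (1 - (r n ξ)^2) * (((n:ℝ)+1) * r (n+1) ξ + ((n:ℝ)-1) * r (n-1) ξ))
          =ᶠ[𝓝 (0:ℝ)] (fun ξ => r n ξ * H ξ) :=
        (hΦan.frequently_eq_iff_eventually_eq hΨan).mp hfeq
      -- value at 0
      have hterm : ((n:ℝ)-1) * r (n-1) 0 = 0 := by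
        rcases eq_or_lt_of_le hn with h | h
        · rw [← h]; norm_num
        · rw [hrk0 (n-1) (by omega) (by omega), mul_zero]
      have hnpos : (0:ℝ) < (n:ℝ) := by exact_mod_cast hn
      have hn1 : ((n:ℝ)+1) ≠ 0 := by positivity
      have hval : r (n+1) 0 = 0 := by
        have h00 := heq.eq_of_nhds
        rw [hrn0, hterm, hH0] at h00
        have : ((n:ℝ)+1) * r (n+1) 0 = 0 := by linarith [h00]
        exact (mul_eq_zero.mp this).resolve_left hn1
      -- derivative at 0
      have hA00 : ((n:ℝ)+1) * r (n+1) 0 + ((n:ℝ)-1) * r (n-1) 0 = 0 := by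
        rw [hval, hterm, mul_zero, zero_add]
      have hΦd : HasDerivAt
          (fun ξ => (1 - (r n ξ)^2) * (((n:ℝ)+1) * r (n+1) ξ + ((n:ℝ)-1) * r (n-1) ξ))
          (((n:ℝ)+1) * deriv (r (n+1)) 0 + ((n:ℝ)-1) * deriv (r (n-1)) 0) 0 := by
        have hf1 : HasDerivAt (fun ξ => 1 - (r n ξ)^2)
            (-(((2:ℕ):ℝ) * r n 0 ^ 1 * deriv (r n) 0)) 0 :=
          (((hdiff n).hasDerivAt.pow 2)).const_sub 1
        have hf2 : HasDerivAt
            (fun ξ => ((n:ℝ)+1) * r (n+1) ξ + ((n:ℝ)-1) * r (n-1) ξ)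
            (((n:ℝ)+1) * deriv (r (n+1)) 0 + ((n:ℝ)-1) * deriv (r (n-1)) 0) 0 :=
          ((hdiff (n+1)).hasDerivAt.const_mul _).add ((hdiff (n-1)).hasDerivAt.const_mul _)
        have := hf1.mul hf2
        have e : -(((2:ℕ):ℝ) * r n 0 ^ 1 * deriv (r n) 0)
              * (((n:ℝ)+1) * r (n+1) 0 + ((n:ℝ)-1) * r (n-1) 0)
            + (1 - (r n 0)^2)
              * (((n:ℝ)+1) * deriv (r (n+1)) 0 + ((n:ℝ)-1) * deriv (r (n-1)) 0)
            = ((n:ℝ)+1) * deriv (r (n+1)) 0 + ((n:ℝ)-1) * deriv (r (n-1)) 0 := by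
          rw [hrn0, hA00]; ring
        rw [e] at this
        exact this
      have hΨd : HasDerivAt (fun ξ => r n ξ * H ξ)
          (deriv (r n) 0 * H 0 + r n 0 * (2*(Real.sin φ/π))) 0 :=
        (hdiff n).hasDerivAt.mul hHd
      have hde : ((n:ℝ)+1) * deriv (r (n+1)) 0 + ((n:ℝ)-1) * deriv (r (n-1)) 0
          = deriv (r n) 0 * H 0 + r n 0 * (2*(Real.sin φ/π)) := by
        rw [← hΦd.deriv, ← hΨd.deriv]
        exact heq.deriv_eq
      rw [hrn0, hH0, hdn] at hde
      -- lower-order derivative term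
      have hdm1 : ((n:ℝ)-1) * deriv (r (n-1)) 0 = Real.sin (((n:ℝ)-1)*φ) / π := by
        rcases eq_or_lt_of_le hn with h | h
        · rw [← h]; norm_num
        · have h2 : (2:ℤ) ≤ n := h
          have hd' : deriv (r (n-1)) 0 = Real.sin (((n-1 : ℤ):ℝ)*φ) / (((n-1:ℤ):ℝ)*π) :=
            (IH (n-1) (by omega) (by omega)).2
          have hc : ((n-1:ℤ):ℝ) = (n:ℝ) - 1 := by push_cast; ring
          rw [hd', hc]
          have hne : (n:ℝ) - 1 ≠ 0 := by
            have : (2:ℝ) ≤ (n:ℝ) := by exact_mod_cast h2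
            linarith
          field_simp
      rw [hdm1] at hde
      -- trig identity
      have htrig : Real.sin (((n:ℝ)+1)*φ)
          = 2*Real.cos φ*Real.sin ((n:ℝ)*φ) - Real.sin (((n:ℝ)-1)*φ) := by
        have e1 : ((n:ℝ)+1)*φ = (n:ℝ)*φ + φ := by ring
        have e2 : ((n:ℝ)-1)*φ = (n:ℝ)*φ - φ := by ring
        rw [e1, e2, Real.sin_add, Real.sin_sub]
        ring
      have hfinal : deriv (r (n+1)) 0 = Real.sin (((n:ℝ)+1)*φ) / (((n:ℝ)+1)*π) := by
        have hne : (n:ℝ) ≠ 0 := ne_of_gt hnpos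
        have hstep : ((n:ℝ)+1) * deriv (r (n+1)) 0 = Real.sin (((n:ℝ)+1)*φ) / π := by
          rw [htrig]
          have : Real.sin ((n:ℝ)*φ) / ((n:ℝ)*π) * (2*(n:ℝ)*Real.cos φ)
              = 2*Real.cos φ*Real.sin ((n:ℝ)*φ)/π := by
            field_simp
          rw [this] at hde
          field_simp at hde ⊢
          linarith
        have := congrArg (· / ((n:ℝ)+1)) hstep
        rw [mul_comm, mul_div_assoc] at this
        rw [mul_comm ((n:ℝ)+1) π]
        rw [← div_div]
        rw [← this]
        field_simp
      constructor
      · exact hval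
      · have hc : ((n+1:ℤ):ℝ) = (n:ℝ) + 1 := by push_cast; ring
        rw [hc]
        exact hfinal
  intro n hn
  obtain ⟨hv, hd⟩ := main n hn n hn le_rfl
  refine ⟨hv, ?_⟩
  have := aux_bigO (hanalytic n) hv
  rw [hd] at this
  exact this
end

section
/- Suppose $S_N(\omega) = \frac{2z}{(1-z)^2}\Big(-\mathrm{Re}\big(I_0(z) - (1-z^{-N})I_1(z)\big) + \frac{2}{N}\big(\mathrm{Re}(z^{-N/2}I_0(z))\big)^2\Big)$ with $z = e^{i\omega}$, where $I_q(z) = \frac{N}{2\pi}\int_0^\pi \big(\frac{\phi}{2\pi}\big)^q\, \mathcal{E}(\phi;\omega)\,d\phi$ and $\mathcal{E}(\phi;\omega) = 1 + i\omega\,\frac{N\phi}{2\pi} - \frac{\omega^2}{2} m_2(\phi) + O(\omega^3)$ uniformly in $\phi \in [0,\pi]$, with $m_2(\phi) \ge (N\phi/2\pi)^2$. Then $\lim_{\omega\to 0} S_N(\omega) = \frac{N}{2\pi}\int_0^\pi \Big(m_2(\phi) - \big(\tfrac{N\phi}{2\pi}\big)^2\Big)\,d\phi$, i.e., $S_N(0)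 = \frac{N}{2\pi}\int_0^\pi \mathrm{Var}\,\mathcal{N}_{(0,\phi)}\,d\phi$. -/
open Real Filter Topology Complex intervalIntegral


namespace PSAux

lemma norm_ofReal_pow (ω : ℝ) (n : ℕ) : ‖(ω : ℂ) ^ n‖ = |ω| ^ n := by
  rw [← Complex.ofReal_pow, Complex.norm_real]
  exact _root_.abs_pow ω n

/-- Second-order Taylor-type expansion at `0` with cubic remainder. -/
def Exp2 (f : ℝ → ℂ) (c₀ c₁ c₂ : ℂ) : Prop :=
  ∃ K δ : ℝ, 0 ≤ K ∧ 0 < δ ∧ δ ≤ 1 ∧ ∀ ω : ℝ, |ω| ≤ δ →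
    ‖f ω - (c₀ + c₁ * ω + c₂ * (ω : ℂ) ^ 2)‖ ≤ K * |ω| ^ 3
theorem Exp2.congr {f g : ℝ → ℂ} {c₀ c₁ c₂ d₀ d₁ d₂ : ℂ}
    (h : Exp2 f c₀ c₁ c₂) (hfg : ∀ ω, g ω = f ω)
    (h₀ : d₀ = c₀) (h₁ : d₁ = c₁) (h₂ : d₂ = c₂) : Exp2 g d₀ d₁ d₂ := by
  obtain ⟨K, δ, hK, hδ, hδ1, hb⟩ := h
  exact ⟨K, δ, hK, hδ, hδ1, fun ω hω => by rw [hfg, h₀, h₁, h₂]; exact hb ω hω⟩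

theorem Exp2.add {f g : ℝ → ℂ} {a₀ a₁ a₂ b₀ b₁ b₂ : ℂ}
    (hf : Exp2 f a₀ a₁ a₂) (hg : Exp2 g b₀ b₁ b₂) :
    Exp2 (fun ω => f ω + g ω) (a₀ + b₀) (a₁ + b₁) (a₂ + b₂) := by
  obtain ⟨K₁, δ₁, hK₁, hδ₁, hδ₁', h₁⟩ := hf
  obtain ⟨K₂, δ₂, hK₂, hδ₂, hδ₂', h₂⟩ := hg
  refine ⟨K₁ + K₂, min δ₁ δ₂, by positivity, lt_min hδ₁ hδ₂,
    le_trans (min_le_left _ _) hδ₁', fun ω hω => ?_⟩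
  have e : f ω + g ω - (a₀ + b₀ + (a₁ + b₁) * ω + (a₂ + b₂) * (ω : ℂ) ^ 2)
      = (f ω - (a₀ + a₁ * ω + a₂ * (ω : ℂ) ^ 2))
        + (g ω - (b₀ + b₁ * ω + b₂ * (ω : ℂ) ^ 2)) := by ring
  rw [e, add_mul]
  exact (norm_add_le _ _).trans (add_le_add (h₁ ω (hω.trans (min_le_left _ _)))
    (h₂ ω (hω.trans (min_le_right _ _))))

theorem Exp2.neg {f : ℝ → ℂ} {a₀ a₁ a₂ : ℂ} (hf : Exp2 f a₀ a₁ a₂) :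
    Exp2 (fun ω => -f ω) (-a₀) (-a₁) (-a₂) := by
  obtain ⟨K, δ, hK, hδ, hδ1, hb⟩ := hf
  refine ⟨K, δ, hK, hδ, hδ1, fun ω hω => ?_⟩
  have e : -f ω - (-a₀ + -a₁ * ω + -a₂ * (ω : ℂ) ^ 2)
      = -(f ω - (a₀ + a₁ * ω + a₂ * (ω : ℂ) ^ 2)) := by ring
  rw [e, norm_neg]; exact hb ω hω

theorem Exp2.sub {f g : ℝ → ℂ} {a₀ a₁ a₂ b₀ b₁ b₂ : ℂ}
    (hf : Exp2 f a₀ a₁ a₂) (hg : Exp2 g b₀ b₁ b₂) :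
    Exp2 (fun ω => f ω - g ω) (a₀ - b₀) (a₁ - b₁) (a₂ - b₂) := by
  simpa [sub_eq_add_neg] using hf.add hg.neg

theorem Exp2.const_mul {f : ℝ → ℂ} {a₀ a₁ a₂ : ℂ} (hf : Exp2 f a₀ a₁ a₂) (c : ℂ) :
    Exp2 (fun ω => c * f ω) (c * a₀) (c * a₁) (c * a₂) := by
  obtain ⟨K, δ, hK, hδ, hδ1, hb⟩ := hf
  refine ⟨‖c‖ * K, δ, by positivity, hδ, hδ1, fun ω hω => ?_⟩
  have e : c * f ω - (c * a₀ + c * a₁ * ω + c * a₂ * (ω : ℂ) ^ 2)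
      = c * (f ω - (a₀ + a₁ * ω + a₂ * (ω : ℂ) ^ 2)) := by ring
  rw [e, norm_mul, mul_assoc]
  exact mul_le_mul_of_nonneg_left (hb ω hω) (norm_nonneg c)

theorem exp2_const (c : ℂ) : Exp2 (fun _ => c) c 0 0 :=
  ⟨0, 1, le_refl 0, one_pos, le_refl 1, fun ω _ => by simp⟩

theorem poly_bound (c₀ c₁ c₂ : ℂ) {ω : ℝ} (hω : |ω| ≤ 1) :
    ‖c₀ + c₁ * ω + c₂ * (ω : ℂ) ^ 2‖ ≤ ‖c₀‖ + ‖c₁‖ + ‖c₂‖ := by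
  refine (norm_add_le _ _).trans (add_le_add ((norm_add_le _ _).trans (add_le_add le_rfl ?_)) ?_)
  · rw [norm_mul, Complex.norm_real]
    calc ‖c₁‖ * |ω| ≤ ‖c₁‖ * 1 := by gcongr
      _ = ‖c₁‖ := mul_one _
  · rw [norm_mul, norm_ofReal_pow]
    calc ‖c₂‖ * |ω| ^ 2 ≤ ‖c₂‖ * 1 :=
          mul_le_mul_of_nonneg_left (pow_le_one₀ (abs_nonneg _) hω) (norm_nonneg _)
      _ = ‖c₂‖ := mul_one _

theorem Exp2.mul {f g : ℝ → ℂ} {a₀ a₁ a₂ b₀ b₁ b₂ : ℂ}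
    (hf : Exp2 f a₀ a₁ a₂) (hg : Exp2 g b₀ b₁ b₂) :
    Exp2 (fun ω => f ω * g ω) (a₀ * b₀) (a₀ * b₁ + a₁ * b₀)
      (a₀ * b₂ + a₁ * b₁ + a₂ * b₀) := by
  obtain ⟨K₁, δ₁, hK₁, hδ₁, hδ₁', h₁⟩ := hf
  obtain ⟨K₂, δ₂, hK₂, hδ₂, hδ₂', h₂⟩ := hg
  set Ma := ‖a₀‖ + ‖a₁‖ + ‖a₂‖ with hMa
  set Mb := ‖b₀‖ + ‖b₁‖ + ‖b₂‖ with hMb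
  have hMa0 : 0 ≤ Ma := by positivity
  have hMb0 : 0 ≤ Mb := by positivity
  refine ⟨(Ma + K₁) * K₂ + K₁ * Mb + (‖a₁ * b₂ + a₂ * b₁‖ + ‖a₂ * b₂‖), min δ₁ δ₂,
    by positivity, lt_min hδ₁ hδ₂, le_trans (min_le_left _ _) hδ₁', fun ω hω => ?_⟩
  have hω₁ : |ω| ≤ δ₁ := hω.trans (min_le_left _ _)
  have hω₂ : |ω| ≤ δ₂ := hω.trans (min_le_right _ _)
  have hω1 : |ω| ≤ 1 := hω₁.trans hδ₁'
  set P := a₀ + a₁ * (ω : ℂ) + a₂ * (ω : ℂ) ^ 2 with hP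
  set Q := b₀ + b₁ * (ω : ℂ) + b₂ * (ω : ℂ) ^ 2 with hQ
  have e : f ω * g ω - (a₀ * b₀ + (a₀ * b₁ + a₁ * b₀) * ω
        + (a₀ * b₂ + a₁ * b₁ + a₂ * b₀) * (ω : ℂ) ^ 2)
      = (f ω * (g ω - Q) + (f ω - P) * Q)
        + ((a₁ * b₂ + a₂ * b₁) * (ω : ℂ) ^ 3 + (a₂ * b₂) * (ω : ℂ) ^ 4) := by
    rw [hP, hQ]; ring
  rw [e]
  have hfb : ‖f ω‖ ≤ Ma + K₁ := by
    calc ‖f ω‖ = ‖P + (f ω - P)‖ := by congr 1; ring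
      _ ≤ ‖P‖ + ‖f ω - P‖ := norm_add_le _ _
      _ ≤ Ma + K₁ * |ω| ^ 3 := add_le_add (poly_bound _ _ _ hω1) (h₁ ω hω₁)
      _ ≤ Ma + K₁ := by
          have h3 : K₁ * |ω| ^ 3 ≤ K₁ * 1 :=
            mul_le_mul_of_nonneg_left (pow_le_one₀ (abs_nonneg _) hω1) hK₁
          linarith
  have t1 : ‖f ω * (g ω - Q)‖ ≤ (Ma + K₁) * (K₂ * |ω| ^ 3) := by
    rw [norm_mul]
    exact mul_le_mul hfb (h₂ ω hω₂) (norm_nonneg _) (by positivity)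
  have t2 : ‖(f ω - P) * Q‖ ≤ (K₁ * |ω| ^ 3) * Mb := by
    rw [norm_mul]
    exact mul_le_mul (h₁ ω hω₁) (poly_bound _ _ _ hω1) (norm_nonneg _) (by positivity)
  have t3 : ‖(a₁ * b₂ + a₂ * b₁) * (ω : ℂ) ^ 3‖ ≤ ‖a₁ * b₂ + a₂ * b₁‖ * |ω| ^ 3 := by
    rw [norm_mul, norm_ofReal_pow]
  have t4 : ‖(a₂ * b₂) * (ω : ℂ) ^ 4‖ ≤ ‖a₂ * b₂‖ * |ω| ^ 3 := by
    rw [norm_mul, norm_ofReal_pow]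
    have : |ω| ^ 4 ≤ |ω| ^ 3 := pow_le_pow_of_le_one (abs_nonneg _) hω1 (by norm_num)
    exact mul_le_mul_of_nonneg_left this (norm_nonneg _)
  have n1 := norm_add_le (f ω * (g ω - Q) + (f ω - P) * Q)
    ((a₁ * b₂ + a₂ * b₁) * (ω : ℂ) ^ 3 + (a₂ * b₂) * (ω : ℂ) ^ 4)
  have n2 := norm_add_le (f ω * (g ω - Q)) ((f ω - P) * Q)
  have n3 := norm_add_le ((a₁ * b₂ + a₂ * b₁) * (ω : ℂ) ^ 3) ((a₂ * b₂) * (ω : ℂ) ^ 4)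
  have hend : ((Ma + K₁) * K₂ + K₁ * Mb + (‖a₁ * b₂ + a₂ * b₁‖ + ‖a₂ * b₂‖)) * |ω| ^ 3
      = (Ma + K₁) * (K₂ * |ω| ^ 3) + (K₁ * |ω| ^ 3) * Mb
        + (‖a₁ * b₂ + a₂ * b₁‖ * |ω| ^ 3 + ‖a₂ * b₂‖ * |ω| ^ 3) := by ring
  rw [hend]
  linarith

theorem Exp2.reC {f : ℝ → ℂ} {c₀ c₁ c₂ : ℂ} (h : Exp2 f c₀ c₁ c₂) :
    Exp2 (fun ω => ((f ω).re : ℂ)) (c₀.re : ℝ) (c₁.re : ℝ) (c₂.re : ℝ) := by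
  obtain ⟨K, δ, hK, hδ, hδ1, hb⟩ := h
  refine ⟨K, δ, hK, hδ, hδ1, fun ω hω => ?_⟩
  have e1 : ((c₀.re : ℝ) : ℂ) + ((c₁.re : ℝ) : ℂ) * ω + ((c₂.re : ℝ) : ℂ) * (ω : ℂ) ^ 2
      = ((c₀.re + c₁.re * ω + c₂.re * ω ^ 2 : ℝ) : ℂ) := by push_cast; ring
  have e2 : (c₀ + c₁ * ω + c₂ * (ω : ℂ) ^ 2).re = c₀.re + c₁.re * ω + c₂.re * ω ^ 2 := by
    simp [Complex.add_re, Complex.mul_re, Complex.ofReal_re, Complex.ofReal_im,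
      ← Complex.ofReal_pow]
  rw [e1, ← Complex.ofReal_sub, Complex.norm_real, ← e2, ← Complex.sub_re]
  exact le_trans (Complex.abs_re_le_norm _) (hb ω hω)

theorem exp2_exp (c : ℂ) : Exp2 (fun ω => Complex.exp (c * ω)) 1 c (c ^ 2 / 2) := by
  refine ⟨‖c‖ ^ 3, min 1 (1 + ‖c‖)⁻¹, by positivity, lt_min one_pos (by positivity),
    min_le_left _ _, fun ω hω => ?_⟩
  have hc1 : ‖c * ω‖ ≤ 1 := by
    rw [norm_mul, Complex.norm_real]
    calc ‖c‖ * |ω| ≤ ‖c‖ * (1 + ‖c‖)⁻¹ := by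
          exact mul_le_mul_of_nonneg_left (hω.trans (min_le_right _ _)) (norm_nonneg _)
      _ ≤ 1 := by
          rw [mul_inv_le_iff₀ (by positivity), one_mul]
          linarith [norm_nonneg c]
  have hb := Complex.exp_bound (x := c * ω) hc1 (n := 3) (by norm_num)
  have hsum : ∑ m ∈ Finset.range 3, (c * ω) ^ m / (Nat.factorial m)
      = 1 + c * ω + c ^ 2 / 2 * (ω : ℂ) ^ 2 := by
    rw [Finset.sum_range_succ, Finset.sum_range_succ, Finset.sum_range_one]
    norm_num [Nat.factorial]
    ring
  rw [hsum] at hb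
  refine hb.trans ?_
  have habs : ‖c * (ω : ℂ)‖ ^ 3 = ‖c‖ ^ 3 * |ω| ^ 3 := by
    rw [norm_mul, Complex.norm_real, mul_pow, Real.norm_eq_abs]
  rw [habs]
  have h1 : (0 : ℝ) ≤ ‖c‖ ^ 3 * |ω| ^ 3 := by positivity
  have h2 : ((Nat.succ 3 : ℕ) : ℝ) * (((Nat.factorial 3 : ℕ) : ℝ) * ((3 : ℕ) : ℝ))⁻¹ ≤ 1 := by
    norm_num [Nat.factorial]
  nlinarith [h1, h2]

theorem Exp2.tendsto_re_div {f : ℝ → ℂ} {b : ℝ} (h : Exp2 f 0 0 (b : ℂ)) :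
    Tendsto (fun ω => (f ω).re / ω ^ 2) (𝓝[≠] (0 : ℝ)) (𝓝 b) := by
  obtain ⟨K, δ, hK, hδ, hδ1, hb⟩ := h
  rw [← tendsto_sub_nhds_zero_iff]
  have hev : ∀ᶠ ω in 𝓝[≠] (0 : ℝ), ‖(f ω).re / ω ^ 2 - b‖ ≤ K * |ω| := by
    have hmem : {ω : ℝ | |ω| ≤ δ} ∈ 𝓝[≠] (0 : ℝ) := by
      apply nhdsWithin_le_nhds
      have : {ω : ℝ | |ω| ≤ δ} ∈ 𝓝 (0 : ℝ) := by
        have := Metric.closedBall_mem_nhds (0 : ℝ) hδ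
        simpa [Metric.closedBall, Real.dist_eq] using this
      exact this
    filter_upwards [hmem, self_mem_nhdsWithin] with ω hω hω0
    have hω0' : ω ≠ 0 := hω0
    have hsq : (0 : ℝ) < ω ^ 2 := by positivity
    have key : |(f ω).re - b * ω ^ 2| ≤ K * |ω| ^ 3 := by
      have e : (f ω).re - b * ω ^ 2
          = (f ω - ((0 : ℂ) + (0 : ℂ) * ω + (b : ℂ) * (ω : ℂ) ^ 2)).re := by
        simp [Complex.sub_re, Complex.mul_re, ← Complex.ofReal_pow]
      rw [e]
      exact le_trans (Complex.abs_re_le_norm _) (hb ω hω)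
    have e2 : (f ω).re / ω ^ 2 - b = ((f ω).re - b * ω ^ 2) / ω ^ 2 := by
      field_simp
    rw [Real.norm_eq_abs, e2, abs_div, abs_of_pos hsq, div_le_iff₀ hsq]
    calc |(f ω).re - b * ω ^ 2| ≤ K * |ω| ^ 3 := key
      _ = K * |ω| * ω ^ 2 := by rw [← _root_.sq_abs ω]; ring
  refine squeeze_zero_norm' hev ?_
  have : Tendsto (fun ω : ℝ => K * |ω|) (𝓝 (0 : ℝ)) (𝓝 (K * |(0 : ℝ)|)) :=
    (continuous_const.mul _root_.continuous_abs).tendsto 0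
  simpa using this.mono_left nhdsWithin_le_nhds

open MeasureTheory in
theorem exp2_J (𝓔 : ℝ → ℝ → ℂ) (m₂ n : ℝ → ℝ)
    (hInt : ∀ ω : ℝ, IntervalIntegrable (fun φ => 𝓔 φ ω) volume 0 π)
    (hm₂Int : IntervalIntegrable m₂ volume 0 π)
    (hn : Continuous n) (C : ℝ)
    (hC : ∀ φ ∈ Set.Icc (0 : ℝ) π, ∀ ω : ℝ, |ω| ≤ 1 →
      ‖𝓔 φ ω - (1 + Complex.I * ω * ((n φ : ℝ) : ℂ) - ((ω ^ 2 / 2 : ℝ) : ℂ) * (m₂ φ : ℂ))‖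
        ≤ C * |ω| ^ 3)
    (g : ℝ → ℝ) (hg : Continuous g) (hg1 : ∀ φ ∈ Set.Icc (0 : ℝ) π, |g φ| ≤ 1) :
    Exp2 (fun ω => ∫ φ in (0 : ℝ)..π, (g φ : ℂ) * 𝓔 φ ω)
      (((∫ φ in (0 : ℝ)..π, g φ : ℝ) : ℂ))
      (Complex.I * ((∫ φ in (0 : ℝ)..π, g φ * n φ : ℝ) : ℂ))
      (-(((∫ φ in (0 : ℝ)..π, g φ * m₂ φ : ℝ) : ℂ) / 2)) := by
  refine ⟨π * max C 0, 1, by positivity, one_pos, le_refl 1, fun ω hω => ?_⟩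
  set P : ℝ → ℂ := fun φ =>
    1 + Complex.I * ω * ((n φ : ℝ) : ℂ) - ((ω ^ 2 / 2 : ℝ) : ℂ) * (m₂ φ : ℂ) with hPdef
  have hgC : Continuous fun φ => ((g φ : ℝ) : ℂ) := Complex.continuous_ofReal.comp hg
  have hE := hInt ω
  have hgE : IntervalIntegrable (fun φ => (g φ : ℂ) * 𝓔 φ ω) volume 0 π :=
    hE.continuousOn_mul hgC.continuousOn
  have hm₂C : IntervalIntegrable (fun φ => (m₂ φ : ℂ)) volume 0 π :=
    ⟨hm₂Int.1.ofReal, hm₂Int.2.ofReal⟩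
  have hgm₂C : IntervalIntegrable (fun φ => (g φ : ℂ) * (m₂ φ : ℂ)) volume 0 π :=
    hm₂C.continuousOn_mul hgC.continuousOn
  have h1cont : Continuous fun φ => (g φ : ℂ) * (1 + Complex.I * ω * ((n φ : ℝ) : ℂ)) :=
    hgC.mul (continuous_const.add (continuous_const.mul (Complex.continuous_ofReal.comp hn)))
  have hgP : IntervalIntegrable (fun φ => (g φ : ℂ) * P φ) volume 0 π := by
    have heq : (fun φ => (g φ : ℂ) * P φ)
        = fun φ => (g φ : ℂ) * (1 + Complex.I * ω * ((n φ : ℝ) : ℂ))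
          - ((ω ^ 2 / 2 : ℝ) : ℂ) * ((g φ : ℂ) * (m₂ φ : ℂ)) := by
      funext φ; rw [hPdef]; ring
    rw [heq]
    exact (h1cont.intervalIntegrable 0 π).sub (hgm₂C.const_mul _)
  have hR : IntervalIntegrable (fun φ => (g φ : ℂ) * (𝓔 φ ω - P φ)) volume 0 π := by
    have heq : (fun φ => (g φ : ℂ) * (𝓔 φ ω - P φ))
        = fun φ => (g φ : ℂ) * 𝓔 φ ω - (g φ : ℂ) * P φ := by funext φ; ring
    rw [heq]; exact hgE.sub hgP
  have hsplit : (∫ φ in (0 : ℝ)..π, (g φ : ℂ) * 𝓔 φ ω)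
      = (∫ φ in (0 : ℝ)..π, (g φ : ℂ) * P φ)
        + ∫ φ in (0 : ℝ)..π, (g φ : ℂ) * (𝓔 φ ω - P φ) := by
    rw [← intervalIntegral.integral_add hgP hR]
    congr 1; funext φ; ring
  have hP : (∫ φ in (0 : ℝ)..π, (g φ : ℂ) * P φ)
      = ((∫ φ in (0 : ℝ)..π, g φ : ℝ) : ℂ)
        + (Complex.I * ω) * ((∫ φ in (0 : ℝ)..π, g φ * n φ : ℝ) : ℂ)
        - ((ω ^ 2 / 2 : ℝ) : ℂ) * ((∫ φ in (0 : ℝ)..π, g φ * m₂ φ : ℝ) : ℂ) := by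
    have heq : (fun φ => (g φ : ℂ) * P φ)
        = fun φ => ((g φ : ℝ) : ℂ) + (Complex.I * ω) * ((g φ * n φ : ℝ) : ℂ)
          - ((ω ^ 2 / 2 : ℝ) : ℂ) * ((g φ * m₂ φ : ℝ) : ℂ) := by
      funext φ; rw [hPdef]; push_cast; ring
    rw [heq]
    have i1 : IntervalIntegrable (fun φ => ((g φ : ℝ) : ℂ)) volume 0 π :=
      hgC.intervalIntegrable 0 π
    have i2 : IntervalIntegrable (fun φ => (Complex.I * ω) * ((g φ * n φ : ℝ) : ℂ)) volume 0 π :=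
      (continuous_const.mul (Complex.continuous_ofReal.comp (hg.mul hn))).intervalIntegrable 0 π
    have i3 : IntervalIntegrable
        (fun φ => ((ω ^ 2 / 2 : ℝ) : ℂ) * ((g φ * m₂ φ : ℝ) : ℂ)) volume 0 π := by
      apply IntervalIntegrable.const_mul
      have heq2 : (fun φ => ((g φ * m₂ φ : ℝ) : ℂ)) = fun φ => (g φ : ℂ) * (m₂ φ : ℂ) := by
        funext φ; push_cast; ring
      rw [heq2]; exact hgm₂C
    rw [intervalIntegral.integral_sub (i1.add i2) i3, intervalIntegral.integral_add i1 i2,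
      intervalIntegral.integral_const_mul, intervalIntegral.integral_const_mul,
      intervalIntegral.integral_ofReal, intervalIntegral.integral_ofReal,
      intervalIntegral.integral_ofReal]
  have hdiff : (∫ φ in (0 : ℝ)..π, (g φ : ℂ) * 𝓔 φ ω)
      - (((∫ φ in (0 : ℝ)..π, g φ : ℝ) : ℂ)
        + Complex.I * ((∫ φ in (0 : ℝ)..π, g φ * n φ : ℝ) : ℂ) * ω
        + (-(((∫ φ in (0 : ℝ)..π, g φ * m₂ φ : ℝ) : ℂ) / 2)) * (ω : ℂ) ^ 2)
      = ∫ φ in (0 : ℝ)..π, (g φ : ℂ) * (𝓔 φ ω - P φ) := by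
    rw [hsplit, hP]; push_cast; ring
  rw [hdiff]
  have hbound : ∀ φ ∈ Set.uIoc (0 : ℝ) π, ‖(g φ : ℂ) * (𝓔 φ ω - P φ)‖ ≤ max C 0 * |ω| ^ 3 := by
    intro φ hφ
    have hφ' : φ ∈ Set.Icc (0 : ℝ) π := by
      rw [Set.uIoc_of_le Real.pi_pos.le] at hφ
      exact ⟨hφ.1.le, hφ.2⟩
    rw [norm_mul, Complex.norm_real, Real.norm_eq_abs]
    calc |g φ| * ‖𝓔 φ ω - P φ‖ ≤ 1 * (C * |ω| ^ 3) :=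
        mul_le_mul (hg1 φ hφ') (hC φ hφ' ω hω) (norm_nonneg _) zero_le_one
      _ = C * |ω| ^ 3 := one_mul _
      _ ≤ max C 0 * |ω| ^ 3 := by
        have : C ≤ max C 0 := le_max_left _ _
        exact mul_le_mul_of_nonneg_right this (by positivity)
  have := intervalIntegral.norm_integral_le_of_norm_le_const hbound
  rw [sub_zero, abs_of_pos Real.pi_pos] at this
  calc ‖∫ φ in (0 : ℝ)..π, (g φ : ℂ) * (𝓔 φ ω - P φ)‖ ≤ max C 0 * |ω| ^ 3 * π := this
    _ = π * max C 0 * |ω| ^ 3 := by ring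



theorem sin_half_ne {ω : ℝ} (hω0 : ω ≠ 0) (hωπ : |ω| < π) : Real.sin (ω / 2) ≠ 0 := by
  rcases lt_or_gt_of_ne hω0 with h | h
  · have h1 : -π < ω := by
      have := neg_abs_le ω; linarith [abs_lt.mp hωπ]
    have : Real.sin (ω / 2) < 0 := by
      apply Real.sin_neg_of_neg_of_neg_pi_lt (by linarith)
      linarith
    exact this.ne
  · have h1 : ω < π := lt_of_abs_lt hωπ
    have : 0 < Real.sin (ω / 2) :=
      Real.sin_pos_of_pos_of_lt_pi (by linarith) (by linarith [Real.pi_pos])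
    exact this.ne'

theorem pref_eq {ω : ℝ} (hω0 : ω ≠ 0) (hωπ : |ω| < π) :
    (2 * Complex.exp (Complex.I * ω) / (1 - Complex.exp (Complex.I * ω)) ^ 2).re
      = -1 / (2 * Real.sin (ω / 2) ^ 2) := by
  set w : ℝ := ω / 2 with hw
  set E := Complex.exp ((w : ℂ) * Complex.I) with hE
  set E' := Complex.exp (-(w : ℂ) * Complex.I) with hE'
  have hEE' : E * E' = 1 := by
    rw [hE, hE', ← Complex.exp_add]
    norm_num
  have hexp : Complex.exp (Complex.I * ω) = E ^ 2 := by
    have harg : Complex.I * (ω : ℂ) = (w : ℂ) * Complex.I + (w : ℂ) * Complex.I := by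
      push_cast [hw]; ring
    rw [harg, Complex.exp_add, hE]
    ring
  have hsin : ((Real.sin w : ℝ) : ℂ) = (E' - E) * Complex.I / 2 := by
    rw [Complex.ofReal_sin]
    have h2s := Complex.two_sin (w : ℂ)
    rw [← hE, ← hE'] at h2s
    linear_combination h2s / 2
  have key : (1 - Complex.exp (Complex.I * ω)) ^ 2
      = -4 * ((Real.sin w : ℝ) : ℂ) ^ 2 * Complex.exp (Complex.I * ω) := by
    rw [hexp, hsin]
    linear_combination (-(1 + E * E' - 2 * E ^ 2)) * hEE'
      + ((E' - E) ^ 2 * E ^ 2) * Complex.I_sq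
  have hs : Real.sin w ≠ 0 := sin_half_ne hω0 hωπ
  have hsC : ((Real.sin w : ℝ) : ℂ) ≠ 0 := Complex.ofReal_ne_zero.mpr hs
  have hXC : Complex.exp (Complex.I * ω) ≠ 0 := Complex.exp_ne_zero _
  set s : ℝ := Real.sin w with hs0
  have hval : 2 * Complex.exp (Complex.I * ω) / (1 - Complex.exp (Complex.I * ω)) ^ 2
      = ((-1 / (2 * s ^ 2) : ℝ) : ℂ) := by
    rw [key]
    have hden : (-4 : ℂ) * ((s : ℝ) : ℂ) ^ 2 * Complex.exp (Complex.I * ω) ≠ 0 := by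
      apply mul_ne_zero (mul_ne_zero (by norm_num) (pow_ne_zero _ hsC)) hXC
    rw [div_eq_iff hden]
    rw [Complex.ofReal_div]
    push_cast
    field_simp
    ring
  rw [hval, Complex.ofReal_re]

theorem tendsto_pref :
    Tendsto (fun ω : ℝ => -(ω ^ 2) / (2 * Real.sin (ω / 2) ^ 2)) (𝓝[≠] (0 : ℝ)) (𝓝 (-2)) := by
  have hslope : Tendsto (fun x : ℝ => Real.sin x / x) (𝓝[≠] (0 : ℝ)) (𝓝 1) := by
    have h := (Real.hasDerivAt_sin 0)
    rw [hasDerivAt_iff_tendsto_slope] at h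
    rw [Real.cos_zero] at h
    refine h.congr fun x => ?_
    simp [slope_fun_def, Real.sin_zero]
    ring
  have hinv : Tendsto (fun x : ℝ => x / Real.sin x) (𝓝[≠] (0 : ℝ)) (𝓝 1) := by
    have := hslope.inv₀ one_ne_zero
    simp only [one_div, inv_inv, inv_one] at this
    refine this.congr fun x => ?_
    rw [inv_div]
  have hcomp : Tendsto (fun ω : ℝ => ω / 2) (𝓝[≠] (0 : ℝ)) (𝓝[≠] (0 : ℝ)) := by
    apply tendsto_nhdsWithin_of_tendsto_nhds_of_eventually_within
    · have : Tendsto (fun ω : ℝ => ω / 2) (𝓝 (0 : ℝ)) (𝓝 (0 / 2 : ℝ)) :=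
        (continuous_id.div_const 2).tendsto 0
      simpa using this.mono_left nhdsWithin_le_nhds
    · filter_upwards [self_mem_nhdsWithin] with ω hω
      simp only [Set.mem_compl_iff, Set.mem_singleton_iff] at hω ⊢
      intro hc
      exact hω (by linarith)
  have h2 : Tendsto (fun ω : ℝ => (ω / 2) / Real.sin (ω / 2)) (𝓝[≠] (0 : ℝ)) (𝓝 1) :=
    hinv.comp hcomp
  have h3 : Tendsto (fun ω : ℝ => -2 * (((ω / 2) / Real.sin (ω / 2)) ^ 2))
      (𝓝[≠] (0 : ℝ)) (𝓝 (-2 * 1 ^ 2)) :=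
    tendsto_const_nhds.mul ((h2.pow 2))
  have heq : ∀ ω : ℝ, -2 * (((ω / 2) / Real.sin (ω / 2)) ^ 2)
      = -(ω ^ 2) / (2 * Real.sin (ω / 2) ^ 2) := by
    intro ω
    rw [div_pow]
    ring
  have hfin := h3.congr heq
  norm_num at hfin
  exact hfin

end PSAux

open PSAux

/-- Small-`ω` limit of the Riser–Kanzieper power-spectrum formula.
Let `𝓔(φ;ω)` be the characteristic function of the counting statistic
`𝓝_{(0,φ)}` of a translation-invariant point process of `N` points on the
circle, so that uniformly in `φ ∈ [0,π]`,
`𝓔(φ;ω) = 1 + iω(Nφ/2π) - (ω²/2) m₂(φ) + O(ω³)` with `m₂(φ) ≥ (Nφ/2π)²`.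
With `z = e^{iω}`, `I_q(ω) = (N/2π)∫₀^π (φ/2π)^q 𝓔(φ;ω) dφ` and
`S_N(ω) = (2z/(1-z)²)(-Re(I₀ - (1-z^{-N})I₁) + (2/N)(Re(z^{-N/2} I₀))²)`,
one has `lim_{ω→0} S_N(ω) = (N/2π)∫₀^π (m₂(φ) - (Nφ/2π)²) dφ
  = (N/2π)∫₀^π Var 𝓝_{(0,φ)} dφ`. -/
theorem power_spectrum_zero_limit (N : ℕ) (hN : 1 ≤ N)
    (𝓔 : ℝ → ℝ → ℂ) (m₂ : ℝ → ℝ)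
    (hInt : ∀ ω : ℝ, IntervalIntegrable (fun φ => 𝓔 φ ω) MeasureTheory.volume 0 π)
    (hm₂Int : IntervalIntegrable m₂ MeasureTheory.volume 0 π)
    (hm₂ : ∀ φ ∈ Set.Icc (0 : ℝ) π, ((N : ℝ) * φ / (2 * π)) ^ 2 ≤ m₂ φ)
    (hunif : ∃ C : ℝ, ∀ φ ∈ Set.Icc (0 : ℝ) π, ∀ ω : ℝ, |ω| ≤ 1 →
      ‖𝓔 φ ω - (1 + Complex.I * ω * (((N : ℝ) * φ / (2 * π) : ℝ) : ℂ)
          - ((ω ^ 2 / 2 : ℝ) : ℂ) * (m₂ φ : ℂ))‖ ≤ C * |ω| ^ 3)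
    (I : ℕ → ℝ → ℂ)
    (hI : ∀ q : ℕ, ∀ ω : ℝ,
      I q ω = ((N : ℝ) / (2 * π) : ℝ) * ∫ φ in (0 : ℝ)..π, ((φ / (2 * π) : ℝ) : ℂ) ^ q * 𝓔 φ ω)
    (S : ℝ → ℝ)
    (hS : ∀ ω : ℝ,
      S ω = (2 * Complex.exp (Complex.I * ω) / (1 - Complex.exp (Complex.I * ω)) ^ 2).re
        * (-(I 0 ω - (1 - Complex.exp (-Complex.I * N * ω)) * I 1 ω).re
            + (2 / N) * ((Complex.exp (-Complex.I * N * ω / 2) * I 0 ω).re) ^ 2)) :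
    Tendsto S (𝓝[≠] (0 : ℝ))
      (𝓝 ((N / (2 * π)) * ∫ φ in (0 : ℝ)..π, (m₂ φ - ((N : ℝ) * φ / (2 * π)) ^ 2))) := by
  obtain ⟨C, hC⟩ := hunif
  have hπ : (π : ℝ) ≠ 0 := Real.pi_ne_zero
  have hπC : ((π : ℝ) : ℂ) ≠ 0 := Complex.ofReal_ne_zero.mpr hπ
  have hN0 : (N : ℝ) ≠ 0 := Nat.cast_ne_zero.mpr (by omega)
  have hNC : ((N : ℝ) : ℂ) ≠ 0 := Complex.ofReal_ne_zero.mpr hN0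
  have hn : Continuous (fun φ : ℝ => (N : ℝ) * φ / (2 * π)) :=
    (continuous_const.mul continuous_id).div_const _
  -- numeric integrals
  have nid : (∫ φ in (0:ℝ)..π, φ) = π ^ 2 / 2 := by
    rw [integral_id]; ring
  have npow : (∫ φ in (0:ℝ)..π, φ ^ 2) = π ^ 3 / 3 := by
    rw [integral_pow]; norm_num
  have n0 : (∫ φ in (0:ℝ)..π, (1:ℝ)) = π := by simp
  have n1 : (∫ φ in (0:ℝ)..π, (N:ℝ) * φ / (2*π)) = (N:ℝ) * π / 4 := by
    have e : (fun φ : ℝ => (N:ℝ) * φ / (2*π)) = fun φ => ((N:ℝ)/(2*π)) * φ := by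
      funext φ; ring
    rw [e, intervalIntegral.integral_const_mul, nid]; field_simp; ring
  have n3 : (∫ φ in (0:ℝ)..π, φ / (2*π)) = π / 4 := by
    have e : (fun φ : ℝ => φ / (2*π)) = fun φ => (1/(2*π)) * φ := by funext φ; ring
    rw [e, intervalIntegral.integral_const_mul, nid]; field_simp; ring
  have n4 : (∫ φ in (0:ℝ)..π, (φ/(2*π)) * ((N:ℝ) * φ / (2*π))) = (N:ℝ) * π / 12 := by
    have e : (fun φ : ℝ => (φ/(2*π)) * ((N:ℝ) * φ / (2*π)))
        = fun φ => ((N:ℝ)/(4*π^2)) * φ ^ 2 := by funext φ; ring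
    rw [e, intervalIntegral.integral_const_mul, npow]; field_simp; ring
  -- J expansions
  have hJ0 := exp2_J 𝓔 m₂ _ hInt hm₂Int hn C hC (fun _ => (1:ℝ)) continuous_const
    (fun φ _ => by norm_num)
  have hJ1 := exp2_J 𝓔 m₂ _ hInt hm₂Int hn C hC (fun φ => φ / (2*π))
    (continuous_id.div_const _)
    (fun φ hφ => by
      have h2π : (0:ℝ) < 2*π := by positivity
      rw [abs_div, _root_.abs_of_nonneg hφ.1, _root_.abs_of_pos h2π, div_le_one h2π]
      linarith [hφ.2, Real.pi_pos])
  beta_reduce at hJ0 hJ1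
  simp only [Complex.ofReal_one, one_mul] at hJ0
  rw [n0, n1] at hJ0
  rw [n3, n4] at hJ1
  -- expansions of I 0 and I 1
  have hI0e : Exp2 (I 0) (((N:ℝ)/2 : ℝ) : ℂ) (Complex.I * (((N:ℝ)^2/8 : ℝ) : ℂ))
      (-((((N:ℝ)/(4*π) * ∫ φ in (0:ℝ)..π, m₂ φ : ℝ)) : ℂ)) := by
    refine (hJ0.const_mul (((N:ℝ)/(2*π) : ℝ) : ℂ)).congr (fun ω => ?_) ?_ ?_ ?_
    · rw [hI 0 ω]
      congr 1
      refine intervalIntegral.integral_congr fun φ _ => ?_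
      norm_num
    · push_cast; field_simp
    · push_cast; field_simp; ring
    · push_cast; ring
  have hI1e : Exp2 (I 1) (((N:ℝ)/8 : ℝ) : ℂ) (Complex.I * (((N:ℝ)^2/24 : ℝ) : ℂ))
      (-((((N:ℝ)/(4*π) * ∫ φ in (0:ℝ)..π, (φ/(2*π)) * m₂ φ : ℝ)) : ℂ)) := by
    refine (hJ1.const_mul (((N:ℝ)/(2*π) : ℝ) : ℂ)).congr (fun ω => ?_) ?_ ?_ ?_
    · rw [hI 1 ω]
      congr 1
      refine intervalIntegral.integral_congr fun φ _ => ?_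
      norm_num
    · push_cast; field_simp; ring
    · push_cast; field_simp; ring
    · push_cast; ring
  -- exp factors
  have hwexp := exp2_exp (-Complex.I * (N : ℂ))
  have h1w : Exp2 (fun ω : ℝ => 1 - Complex.exp (-Complex.I * N * ω))
      0 (Complex.I * (N : ℂ)) (((N:ℝ)^2/2 : ℝ) : ℂ) := by
    refine ((exp2_const 1).sub hwexp).congr (fun ω => rfl) ?_ ?_ ?_
    · ring
    · ring
    · push_cast
      linear_combination ((N:ℂ)^2/2) * Complex.I_mul_I
  have heexp : Exp2 (fun ω : ℝ => Complex.exp (-Complex.I * N * ω / 2))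
      1 (-Complex.I * (N : ℂ) / 2) ((-Complex.I * (N : ℂ) / 2) ^ 2 / 2) := by
    refine (exp2_exp (-Complex.I * (N : ℂ) / 2)).congr (fun ω => ?_) rfl rfl rfl
    exact congrArg Complex.exp (by ring)
  -- T = I₀ - (1-w) I₁
  have hT : Exp2 (fun ω => I 0 ω - (1 - Complex.exp (-Complex.I * N * ω)) * I 1 ω)
      (((N:ℝ)/2 : ℝ) : ℂ) 0
      (((-((N:ℝ)/(4*π) * ∫ φ in (0:ℝ)..π, m₂ φ) - (N:ℝ)^3/48 : ℝ)) : ℂ) := by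
    refine (hI0e.sub (h1w.mul hI1e)).congr (fun ω => rfl) ?_ ?_ ?_
    · push_cast; ring
    · push_cast; ring
    · push_cast
      linear_combination ((N:ℂ)^3/24) * Complex.I_mul_I
  have hTre : Exp2 (fun ω => (((I 0 ω - (1 - Complex.exp (-Complex.I * N * ω)) * I 1 ω).re : ℝ) : ℂ))
      (((N:ℝ)/2 : ℝ) : ℂ) 0
      (((-((N:ℝ)/(4*π) * ∫ φ in (0:ℝ)..π, m₂ φ) - (N:ℝ)^3/48 : ℝ)) : ℂ) := by
    refine hT.reC.congr (fun ω => rfl) ?_ ?_ ?_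
    · simp only [Complex.ofReal_re]
    · simp only [Complex.zero_re, Complex.ofReal_zero]
    · simp only [Complex.ofReal_re]
  -- E = e^{-iNω/2} I₀
  have hE : Exp2 (fun ω => Complex.exp (-Complex.I * N * ω / 2) * I 0 ω)
      (((N:ℝ)/2 : ℝ) : ℂ) (Complex.I * ((-((N:ℝ)^2/8) : ℝ) : ℂ))
      ((-((N:ℝ)/(4*π) * ∫ φ in (0:ℝ)..π, m₂ φ) : ℝ) : ℂ) := by
    refine (heexp.mul hI0e).congr (fun ω => rfl) ?_ ?_ ?_
    · push_cast; ring
    · push_cast; ring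
    · push_cast; ring
  have hEre : Exp2 (fun ω => (((Complex.exp (-Complex.I * N * ω / 2) * I 0 ω).re : ℝ) : ℂ))
      (((N:ℝ)/2 : ℝ) : ℂ) 0
      ((-((N:ℝ)/(4*π) * ∫ φ in (0:ℝ)..π, m₂ φ) : ℝ) : ℂ) := by
    refine hE.reC.congr (fun ω => rfl) ?_ ?_ ?_
    · simp only [Complex.ofReal_re]
    · rw [show (Complex.I * ((-((N:ℝ)^2/8) : ℝ) : ℂ)).re = 0 by
        simp [pow_two, Complex.mul_im, Complex.mul_re]]
      simp
    · simp only [Complex.ofReal_re]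
  -- the bracket function
  -- the bracket function
  have hsqe := (hEre.mul hEre).const_mul (((2/(N:ℝ) : ℝ)) : ℂ)
  have hBc0 := hTre.neg.add hsqe
  have hBc : Exp2 (fun ω =>
      -(((I 0 ω - (1 - Complex.exp (-Complex.I * N * ω)) * I 1 ω).re : ℂ))
      + ((2/(N:ℝ) : ℝ) : ℂ) * ((((Complex.exp (-Complex.I * N * ω / 2) * I 0 ω).re : ℂ))
          * (((Complex.exp (-Complex.I * N * ω / 2) * I 0 ω).re : ℂ))))
      0 0 ((((N:ℝ)^3/48 - (N:ℝ)/(4*π) * ∫ φ in (0:ℝ)..π, m₂ φ : ℝ)) : ℂ) := by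
    refine hBc0.congr (fun ω => rfl) ?_ ?_ ?_
    · have hNC' : (N : ℂ) ≠ 0 := Nat.cast_ne_zero.mpr (by omega)
      push_cast
      field_simp
      ring
    · push_cast; ring
    · have hNC' : (N : ℂ) ≠ 0 := Nat.cast_ne_zero.mpr (by omega)
      push_cast
      field_simp
      ring
  have htd := hBc.tendsto_re_div
  have hmul := htd.mul tendsto_pref
  have hball : ∀ᶠ ω in 𝓝[≠] (0:ℝ), |ω| < π := by
    apply nhdsWithin_le_nhds
    filter_upwards [Metric.ball_mem_nhds (0:ℝ) Real.pi_pos] with ω hω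
    simpa [Real.dist_eq] using hω
  have heq : (fun ω =>
      ((-(((I 0 ω - (1 - Complex.exp (-Complex.I * N * ω)) * I 1 ω).re : ℂ))
      + ((2/(N:ℝ) : ℝ) : ℂ) * ((((Complex.exp (-Complex.I * N * ω / 2) * I 0 ω).re : ℂ))
          * (((Complex.exp (-Complex.I * N * ω / 2) * I 0 ω).re : ℂ)))).re) / ω ^ 2
        * (-(ω ^ 2) / (2 * Real.sin (ω/2) ^ 2))) =ᶠ[𝓝[≠] (0:ℝ)] S := by
    filter_upwards [hball, self_mem_nhdsWithin] with ω hωπ hω0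
    have hω0' : ω ≠ 0 := hω0
    have hre : (-(((I 0 ω - (1 - Complex.exp (-Complex.I * N * ω)) * I 1 ω).re : ℂ))
      + ((2/(N:ℝ) : ℝ) : ℂ) * ((((Complex.exp (-Complex.I * N * ω / 2) * I 0 ω).re : ℂ))
          * (((Complex.exp (-Complex.I * N * ω / 2) * I 0 ω).re : ℂ)))).re
        = -(I 0 ω - (1 - Complex.exp (-Complex.I * N * ω)) * I 1 ω).re
          + 2/(N:ℝ) * ((Complex.exp (-Complex.I * N * ω / 2) * I 0 ω).re) ^ 2 := by
      have e : (-(((I 0 ω - (1 - Complex.exp (-Complex.I * N * ω)) * I 1 ω).re : ℂ))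
        + ((2/(N:ℝ) : ℝ) : ℂ) * ((((Complex.exp (-Complex.I * N * ω / 2) * I 0 ω).re : ℂ))
          * (((Complex.exp (-Complex.I * N * ω / 2) * I 0 ω).re : ℂ))))
          = (((-(I 0 ω - (1 - Complex.exp (-Complex.I * N * ω)) * I 1 ω).re
          + 2/(N:ℝ) * ((Complex.exp (-Complex.I * N * ω / 2) * I 0 ω).re) ^ 2 : ℝ)) : ℂ) := by
        push_cast; ring
      rw [e, Complex.ofReal_re]
    rw [hS ω, pref_eq hω0' hωπ, hre]
    have hω2 : ω ^ 2 ≠ 0 := pow_ne_zero _ hω0'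
    have hs : Real.sin (ω/2) ≠ 0 := sin_half_ne hω0' hωπ
    field_simp
  have hsqcont : Continuous (fun φ : ℝ => ((N:ℝ) * φ / (2*π)) ^ 2) := hn.pow 2
  have hsqint : (∫ φ in (0:ℝ)..π, ((N:ℝ) * φ / (2*π)) ^ 2) = (N:ℝ)^2 * π / 12 := by
    have e : (fun φ : ℝ => ((N:ℝ) * φ / (2*π)) ^ 2)
        = fun φ => ((N:ℝ)^2/(4*π^2)) * φ ^ 2 := by funext φ; ring
    rw [e, intervalIntegral.integral_const_mul, npow]; field_simp; ring
  have hval : ((N:ℝ) / (2 * π)) * (∫ φ in (0:ℝ)..π, (m₂ φ - ((N : ℝ) * φ / (2 * π)) ^ 2))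
      = ((N:ℝ)^3/48 - (N:ℝ)/(4*π) * ∫ φ in (0:ℝ)..π, m₂ φ) * (-2) := by
    rw [intervalIntegral.integral_sub hm₂Int (hsqcont.intervalIntegrable 0 π), hsqint]
    field_simp
    ring
  rw [hval]
  exact Filter.Tendsto.congr' heq hmul
end
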